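/- Let (x^{(j)})_{j≥0} be points in ℝ^d with ‖x^{(j)} − x*‖² ≤ 2·(1/8)^{j+1}·(E_0/λ) for all j ≥ 0, where E_0, λ > 0. For J_+ geometric with P[J_+ = k] = 2^{-(k+1)}, J = j_0 + J_+ with integer j_0 ≥ 2, the MLMC estimator X = x^{(j_0)} + 2^{J_+ + 1}(x^{(J)} − x^{(max(J−1, j_0))}) satisfies E‖X − x*‖² ≤ 6.5·E_0/(λ·8^{j_0}), and in particular E‖X − x*‖² ≤ E_0/(4λ) when j_0 ≥ 2. -/

import Mathlib

set_option maxHeartbeats 1000000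

private lemma stmt8_helper (B s2 t U nu nw na nb : ℝ) (hBpos : 0 < B) (hs2 : 0 < s2)
    (ht : 0 < t) (hU : 0 ≤ U) (hnu : 0 ≤ nu) (hnw : 0 ≤ nw) (hna : 0 ≤ na) (hnb : 0 ≤ nb)
    (h1 : U ≤ nu + 4 * t * nw) (h2 : nw ≤ na + nb)
    (h3 : na ^ 2 ≤ B * s2 ^ 3 / 32) (h4 : nb ^ 2 ≤ B * s2 ^ 3 / 4) (h5 : nu ^ 2 ≤ B / 4)
    (hts : t * s2 = 1) :
    s2 / 4 * U ^ 2 ≤ B / 8 * s2 + 9 / 2 * B * s2 ^ 2 := by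
  have hw2 : nw ^ 2 ≤ 9 / 16 * B * s2 ^ 3 := by
    have ha : nw ^ 2 ≤ (na + nb) ^ 2 := by nlinarith
    nlinarith [sq_nonneg (na - nb)]
  have hU2 : U ^ 2 ≤ (nu + 4 * t * nw) ^ 2 := by nlinarith
  have hU3 : U ^ 2 ≤ 2 * nu ^ 2 + 32 * t ^ 2 * nw ^ 2 := by
    nlinarith [sq_nonneg (nu - 4 * t * nw)]
  have hkey : t ^ 2 * s2 ^ 3 = s2 := by
    calc t ^ 2 * s2 ^ 3 = (t * s2) ^ 2 * s2 := by ring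
      _ = s2 := by rw [hts]; ring
  have h32 : 32 * t ^ 2 * nw ^ 2 ≤ 18 * B * s2 := by
    have := mul_le_mul_of_nonneg_left hw2 (by positivity : (0:ℝ) ≤ 32 * t ^ 2)
    have he : 32 * t ^ 2 * (9 / 16 * B * s2 ^ 3) = 18 * B * s2 := by
      rw [show 32 * t ^ 2 * (9 / 16 * B * s2 ^ 3) = 18 * B * (t ^ 2 * s2 ^ 3) by ring, hkey]
    linarith
  have hN3 : U ^ 2 ≤ B / 2 + 18 * B * s2 := by linarith
  have := mul_le_mul_of_nonneg_left hN3 (by positivity : (0:ℝ) ≤ s2 / 4)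
  nlinarith

/-- Variance bound of the MLMC estimator: geometric decay of squared distances implies
E‖X − x*‖² ≤ 6.5·E₀/(λ·8^{j₀}), and ≤ E₀/(4λ) when j₀ ≥ 2. -/
theorem stmt8 {d : ℕ} (x : ℕ → EuclideanSpace ℝ (Fin d)) (xstar : EuclideanSpace ℝ (Fin d))
    (E0 lam : ℝ) (hE0 : 0 < E0) (hlam : 0 < lam) (j0 : ℕ) (hj0 : 2 ≤ j0)
    (hdecay : ∀ j : ℕ, ‖x j - xstar‖ ^ 2 ≤ 2 * (1 / 8 : ℝ) ^ (j + 1) * (E0 / lam)) :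
    (∑' k : ℕ, ((1 / 2 : ℝ) ^ (k + 1)) *
        ‖x j0 + ((2 : ℝ) ^ (k + 1)) • (x (j0 + k) - x (max (j0 + k - 1) j0)) - xstar‖ ^ 2)
      ≤ 6.5 * E0 / (lam * 8 ^ j0)
    ∧ (∑' k : ℕ, ((1 / 2 : ℝ) ^ (k + 1)) *
        ‖x j0 + ((2 : ℝ) ^ (k + 1)) • (x (j0 + k) - x (max (j0 + k - 1) j0)) - xstar‖ ^ 2)
      ≤ E0 / (4 * lam) := by
  set B : ℝ := (1 / 8 : ℝ) ^ j0 * (E0 / lam) with hB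
  have hBpos : 0 < B := by positivity
  set f : ℕ → ℝ := fun k => ((1 / 2 : ℝ) ^ (k + 1)) *
      ‖x j0 + ((2 : ℝ) ^ (k + 1)) • (x (j0 + k) - x (max (j0 + k - 1) j0)) - xstar‖ ^ 2 with hf
  have hmain : (∑' k, f k) ≤ 6.5 * E0 / (lam * 8 ^ j0) := by
    have hBeq : 6.5 * E0 / (lam * 8 ^ j0) = 6.5 * B := by
      rw [hB]; field_simp; rw [← mul_pow]; norm_num
    rw [hBeq]
    by_cases hs : Summable f
    · -- bound f 0
      have h0 : f 0 ≤ B / 8 := by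
        have hmax0 : max (j0 - 1) j0 = j0 := max_eq_right (Nat.sub_le _ _)
        have hd := hdecay j0
        have he : 2 * (1 / 8 : ℝ) ^ (j0 + 1) * (E0 / lam) = B / 4 := by
          rw [pow_succ, hB]; ring
        rw [he] at hd
        have h00 : f 0 = 1 / 2 * ‖x j0 - xstar‖ ^ 2 := by
          simp [hf, hmax0]
        rw [h00]
        linarith
      -- bound f (m+1)
      have hsucc : ∀ m : ℕ, f (m + 1) ≤
          B / 8 * (1 / 2 : ℝ) ^ m + 9 / 2 * B * (1 / 4 : ℝ) ^ m := by
        intro m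
        set s2 : ℝ := (1 / 2 : ℝ) ^ m with hs2
        set t : ℝ := (2 : ℝ) ^ m with ht
        have htpos : (0 : ℝ) < t := by positivity
        have hs2pos : (0 : ℝ) < s2 := by positivity
        have hts2 : t * s2 = 1 := by
          rw [ht, hs2, ← mul_pow]; norm_num
        have hs4 : (1 / 4 : ℝ) ^ m = s2 ^ 2 := by
          rw [hs2, ← pow_right_comm]; norm_num
        have hs8 : (1 / 8 : ℝ) ^ m = s2 ^ 3 := by
          rw [hs2, ← pow_right_comm]; norm_num
        have hmax : max (j0 + (m + 1) - 1) j0 = j0 + m := by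
          have h1 : j0 + (m + 1) - 1 = j0 + m := by omega
          rw [h1]; exact max_eq_left (Nat.le_add_right _ _)
        set u : EuclideanSpace ℝ (Fin d) := x j0 - xstar with hu
        set w : EuclideanSpace ℝ (Fin d) := x (j0 + m + 1) - x (j0 + m) with hw
        have hc : ((2 : ℝ) ^ (m + 1 + 1)) = 4 * t := by
          rw [ht, pow_add]; ring
        have hfm : f (m + 1) = s2 / 4 * ‖u + (4 * t) • w‖ ^ 2 := by
          simp only [hf, hmax]
          rw [hc]
          have h1 : x j0 + (4 * t) • (x (j0 + (m + 1)) - x (j0 + m)) - xstar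
              = u + (4 * t) • w := by
            rw [hu, hw, add_sub_right_comm]
            rfl
          rw [h1, hs2, pow_add]
          ring
        rw [hfm, hs4]
        -- norm bounds
        have hN : ‖u + (4 * t) • w‖ ≤ ‖u‖ + 4 * t * ‖w‖ := by
          calc ‖u + (4 * t) • w‖ ≤ ‖u‖ + ‖(4 * t) • w‖ := norm_add_le _ _
            _ = ‖u‖ + 4 * t * ‖w‖ := by
                rw [norm_smul, Real.norm_eq_abs, abs_of_pos (by linarith)]
        have hwle : ‖w‖ ≤ ‖x (j0 + m + 1) - xstar‖ + ‖x (j0 + m) - xstar‖ := by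
          have h2 : w = (x (j0 + m + 1) - xstar) - (x (j0 + m) - xstar) := by
            rw [hw]; abel
          rw [h2]; exact norm_sub_le _ _
        -- decay bounds
        have hda := hdecay (j0 + m + 1)
        have hdb := hdecay (j0 + m)
        have hdu := hdecay j0
        have hea : 2 * (1 / 8 : ℝ) ^ (j0 + m + 1 + 1) * (E0 / lam) = B * s2 ^ 3 / 32 := by
          rw [show j0 + m + 1 + 1 = j0 + m + 2 by ring, pow_add, pow_add, ← hs8, hB]; ring
        have heb : 2 * (1 / 8 : ℝ) ^ (j0 + m + 1) * (E0 / lam) = B * s2 ^ 3 / 4 := by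
          rw [pow_add, pow_add, ← hs8, hB]; ring
        have heu : 2 * (1 / 8 : ℝ) ^ (j0 + 1) * (E0 / lam) = B / 4 := by
          rw [pow_succ, hB]; ring
        rw [hea] at hda
        rw [heb] at hdb
        rw [heu] at hdu
        exact stmt8_helper B s2 t _ _ _ _ _ hBpos hs2pos htpos (norm_nonneg _)
          (norm_nonneg _) (norm_nonneg _) (norm_nonneg _) (norm_nonneg _)
          hN hwle hda hdb hdu hts2
      have hsum2 : Summable (fun m : ℕ =>
          B / 8 * (1 / 2 : ℝ) ^ m + 9 / 2 * B * (1 / 4 : ℝ) ^ m) := by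
        exact ((summable_geometric_of_lt_one (by norm_num) (by norm_num)).mul_left _).add
          ((summable_geometric_of_lt_one (by norm_num) (by norm_num)).mul_left _)
      have hshift : Summable (fun m => f (m + 1)) := (summable_nat_add_iff 1).2 hs
      have hsplit : (∑' k, f k) = f 0 + ∑' m, f (m + 1) := Summable.tsum_eq_zero_add hs
      have hb2 : (∑' m, f (m + 1)) ≤
          ∑' m : ℕ, (B / 8 * (1 / 2 : ℝ) ^ m + 9 / 2 * B * (1 / 4 : ℝ) ^ m) :=
        Summable.tsum_le_tsum hsucc hshift hsum2
      have hg : (∑' m : ℕ, (B / 8 * (1 / 2 : ℝ) ^ m + 9 / 2 * B * (1 / 4 : ℝ) ^ m))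
          = B / 4 + 6 * B := by
        rw [Summable.tsum_add ((summable_geometric_of_lt_one (by norm_num) (by norm_num)).mul_left _)
          ((summable_geometric_of_lt_one (by norm_num) (by norm_num)).mul_left _),
          tsum_mul_left, tsum_mul_left,
          tsum_geometric_of_lt_one (by norm_num) (by norm_num),
          tsum_geometric_of_lt_one (by norm_num) (by norm_num)]
        norm_num
        ring
      rw [hsplit]
      rw [hg] at hb2
      linarith
    · rw [tsum_eq_zero_of_not_summable hs]
      positivity
  refine ⟨hmain, le_trans hmain ?_⟩
  have h64 : (64 : ℝ) ≤ 8 ^ j0 := by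
    calc (64 : ℝ) = 8 ^ 2 := by norm_num
      _ ≤ 8 ^ j0 := pow_le_pow_right₀ (by norm_num) hj0
  rw [div_le_div_iff₀ (by positivity) (by positivity)]
  nlinarith [mul_nonneg (mul_nonneg hE0.le hlam.le) (sub_nonneg.2 h64)]
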